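/- Suppose λ ∈ E is regular, i.e. (λ,α) ≠ 0 for all α ∈ Δ, and admissible, i.e. (λ − ρ(λ), α∨) ∈ ℤ for all α ∈ Δ. Then (λ − ρ(λ), α) ≥ 0 for every α ∈ Δ with (α,λ) > 0; i.e. λ ∈ ρ(λ) + C_λ, where C_λ = {ξ ∈ E : (ξ,α) ≥ 0 for all α ∈ Δ with (α,λ) > 0} is the closed Weyl chamber determined by λ. (Regular admissible elements are very regular.) -/

import Mathlib

open scoped RealInnerProductSpace
open Finset

section Aux
variable {E : Type*} [NormedAddCommGroup E] [InnerProductSpace ℝ E]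

lemma aux_inner_self_pos {α : E} (h : α ≠ 0) : 0 < ⟪α, α⟫ := by
  rw [real_inner_self_eq_norm_mul_norm]
  exact mul_pos (norm_pos_iff.2 h) (norm_pos_iff.2 h)

lemma aux_neg_mem {Δ : Finset E} (hΔ0 : (0:E) ∉ Δ)
    (hΔrefl : ∀ α ∈ Δ, ∀ β ∈ Δ, β - (2 * ⟪β, α⟫ / ⟪α, α⟫) • α ∈ Δ)
    {α : E} (hα : α ∈ Δ) : -α ∈ Δ := by
  have hα0 : α ≠ 0 := fun h => hΔ0 (h ▸ hα)
  have hip : ⟪α,α⟫ ≠ 0 := ne_of_gt (aux_inner_self_pos hα0)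
  have h := hΔrefl α hα α hα
  have hc : 2 * ⟪α,α⟫ / ⟪α,α⟫ = (2:ℝ) := by field_simp
  rw [hc] at h
  have : α - (2:ℝ) • α = -α := by module
  rwa [this] at h

lemma aux_strict_cs {Δ : Finset E} (hΔ0 : (0:E) ∉ Δ)
    (hΔred : ∀ α ∈ Δ, ∀ t : ℝ, t • α ∈ Δ → t = 1 ∨ t = -1)
    {α β : E} (hα : α ∈ Δ) (hβ : β ∈ Δ) (h1 : β ≠ α) (h2 : β ≠ -α) :
    ⟪β, α⟫ * ⟪β, α⟫ < ⟪α, α⟫ * ⟪β, β⟫ := by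
  have hle := real_inner_mul_inner_self_le α β
  have hα0 : α ≠ 0 := fun h => hΔ0 (h ▸ hα)
  have hβ0 : β ≠ 0 := fun h => hΔ0 (h ▸ hβ)
  rcases lt_or_eq_of_le hle with h | h
  · rw [← real_inner_comm β α]
    exact h
  · exfalso
    have habs : |⟪α, β⟫ / (‖α‖ * ‖β‖)| = 1 := by
      rw [abs_div, abs_mul, abs_norm, abs_norm, div_eq_one_iff_eq]
      · have h1 : ⟪α,β⟫ * ⟪α,β⟫ = (‖α‖*‖β‖) * (‖α‖*‖β‖) := by
          rw [h, real_inner_self_eq_norm_mul_norm, real_inner_self_eq_norm_mul_norm]; ring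
        have h2 : 0 ≤ ‖α‖ * ‖β‖ := by positivity
        nlinarith [abs_nonneg ⟪α,β⟫, sq_abs ⟪α,β⟫, abs_mul_abs_self ⟪α,β⟫]
      · exact ne_of_gt (mul_pos (norm_pos_iff.2 hα0) (norm_pos_iff.2 hβ0))
    rw [abs_real_inner_div_norm_mul_norm_eq_one_iff] at habs
    obtain ⟨-, r, hr0, rfl⟩ := habs
    rcases hΔred α hα r hβ with rfl | rfl
    · exact h1 (one_smul ℝ α)
    · exact h2 (by module)

end Aux

section Core
variable {E : Type*} [NormedAddCommGroup E] [InnerProductSpace ℝ E]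

lemma aux_refl_pos {Δ : Finset E} (hΔ0 : (0:E) ∉ Δ)
    (hΔred : ∀ α ∈ Δ, ∀ t : ℝ, t • α ∈ Δ → t = 1 ∨ t = -1)
    (hΔrefl : ∀ α ∈ Δ, ∀ β ∈ Δ, β - (2 * ⟪β, α⟫ / ⟪α, α⟫) • α ∈ Δ)
    (hΔcrys : ∀ α ∈ Δ, ∀ β ∈ Δ, ∃ n : ℤ, 2 * ⟪β, α⟫ / ⟪α, α⟫ = (n : ℝ))
    {lam : E} (hreg : ∀ α ∈ Δ, ⟪α, lam⟫ ≠ 0)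
    {α : E} (hα : α ∈ Δ) (hαpos : 0 < ⟪α, lam⟫)
    (hsimple : ¬ ∃ β ∈ Δ, ∃ γ ∈ Δ, 0 < ⟪β, lam⟫ ∧ 0 < ⟪γ, lam⟫ ∧ β + γ = α)
    {β : E} (hβ : β ∈ Δ) (hβpos : 0 < ⟪β, lam⟫) (hβα : β ≠ α) :
    0 < ⟪β - (2 * ⟪β, α⟫ / ⟪α, α⟫) • α, lam⟫ := by
  have hα0 : α ≠ 0 := fun h => hΔ0 (h ▸ hα)
  have hβ0 : β ≠ 0 := fun h => hΔ0 (h ▸ hβ)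
  have haa : 0 < ⟪α, α⟫ := aux_inner_self_pos hα0
  have hbb : 0 < ⟪β, β⟫ := aux_inner_self_pos hβ0
  have hβnα : β ≠ -α := by
    rintro rfl; rw [inner_neg_left] at hβpos; linarith
  set c : ℝ := 2 * ⟪β, α⟫ / ⟪α, α⟫ with hc
  have hγ'Δ : β - c • α ∈ Δ := hΔrefl α hα β hβ
  by_contra hcon
  have hγ'neg : ⟪β - c • α, lam⟫ < 0 :=
    lt_of_le_of_ne (not_lt.1 hcon) (hreg _ hγ'Δ)
  have hγ'inner : ⟪β - c • α, lam⟫ = ⟪β, lam⟫ - c * ⟪α, lam⟫ := by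
    rw [inner_sub_left, real_inner_smul_left]
  obtain ⟨k, hk⟩ := hΔcrys α hα β hβ
  rw [← hc] at hk
  have hcpos : 0 < c := by
    by_contra hcc
    push_neg at hcc
    nlinarith
  have hk1 : 1 ≤ k := by exact_mod_cast (by rw [← hk]; exact hcpos : (0:ℝ) < (k:ℝ))
  have hγΔ : c • α - β ∈ Δ := by
    have := aux_neg_mem hΔ0 hΔrefl hγ'Δ
    rwa [neg_sub] at this
  have hγpos : 0 < ⟪c • α - β, lam⟫ := by
    rw [inner_sub_left, real_inner_smul_left]; linarith [hγ'inner ▸ hγ'neg]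
  -- case k = 1
  rcases eq_or_lt_of_le hk1 with hk1' | hk2
  · apply hsimple
    refine ⟨c • α - β, hγΔ, β, hβ, hγpos, hβpos, ?_⟩
    have : c = 1 := by rw [hk, ← hk1']; norm_num
    rw [this, one_smul]; abel
  -- case k ≥ 2
  have hk2 : 2 ≤ k := hk2
  obtain ⟨m, hm⟩ := hΔcrys β hβ α hα
  have hba : 0 < ⟪β, α⟫ := by
    have : c * ⟪α,α⟫ = 2 * ⟪β,α⟫ := by rw [hc, div_mul_cancel₀ _ (ne_of_gt haa)]
    nlinarith
  have hm1 : 1 ≤ m := by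
    have : (0:ℝ) < (m:ℝ) := by
      rw [← hm]
      have : 0 < ⟪α, β⟫ := by rw [← real_inner_comm α β]; exact hba
      positivity
    exact_mod_cast this
  have hkm : k * m ≤ 3 := by
    have hcs := aux_strict_cs hΔ0 hΔred hα hβ hβα hβnα
    have hcs' : ⟪α, β⟫ * ⟪α, β⟫ < ⟪α, α⟫ * ⟪β, β⟫ := by
      rw [real_inner_comm β α]; exact hcs
    have h4 : ((k:ℝ)) * (m:ℝ) < 4 := by
      rw [← hk, ← hm, hc]
      rw [div_mul_div_comm, div_lt_iff₀ (by positivity)]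
      nlinarith
    have h4' : (k * m : ℤ) < 4 := by exact_mod_cast (show ((k*m : ℤ):ℝ) < ((4:ℤ):ℝ) by push_cast; linarith)
    omega
  have hmeq : m = 1 := by nlinarith
  -- s_β α = α - β ∈ Δ
  have hαβΔ : α - β ∈ Δ := by
    have h := hΔrefl β hβ α hα
    rw [hm, hmeq] at h
    simpa using h
  have hδΔ : β - α ∈ Δ := by
    have := aux_neg_mem hΔ0 hΔrefl hαβΔ
    rwa [neg_sub] at this
  rcases lt_or_gt_of_ne (hreg _ hδΔ) with hδneg | hδpos
  · -- α - β positive, α = (α - β) + β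
    apply hsimple
    refine ⟨α - β, hαβΔ, β, hβ, ?_, hβpos, by abel⟩
    rw [inner_sub_left]; rw [inner_sub_left] at hδneg; linarith
  · -- β - α positive
    have hk3 : k ≤ 3 := by nlinarith
    rcases eq_or_lt_of_le hk2 with hk2' | hk3' 
    · -- k = 2 : (c•α - β) + (β - α) = α
      apply hsimple
      refine ⟨c • α - β, hγΔ, β - α, hδΔ, hγpos, hδpos, ?_⟩
      have hc2 : c = 2 := by rw [hk, ← hk2']; norm_num
      rw [hc2]; module
    · -- k = 3
      have hk3' : k = 3 := le_antisymm hk3 hk3'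
      have hc3 : c = 3 := by rw [hk, hk3']; norm_num
      have hcδ : 2 * ⟪β - α, α⟫ / ⟪α, α⟫ = 1 := by
        rw [inner_sub_left]
        have : 2 * ⟪β, α⟫ = c * ⟪α, α⟫ := by rw [hc, div_mul_cancel₀ _ (ne_of_gt haa)]
        rw [hc3] at this
        field_simp
        linarith
      have hεΔ : β - α - α ∈ Δ := by
        have h := hΔrefl α hα (β - α) hδΔ
        rwa [hcδ, one_smul] at h
      have hε2 : β - α - α = β - (2:ℝ) • α := by module
      rcases lt_or_gt_of_ne (hreg _ hεΔ) with hεneg | hεpos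
      · -- 2α - β positive : (2α - β) + (β - α) = α
        apply hsimple
        have hnεΔ : -(β - α - α) ∈ Δ := aux_neg_mem hΔ0 hΔrefl hεΔ
        refine ⟨-(β - α - α), hnεΔ, β - α, hδΔ, ?_, hδpos, by abel⟩
        rw [inner_neg_left]; linarith
      · -- β - 2α positive : (β - 2α) + (3α - β) = α
        apply hsimple
        refine ⟨β - α - α, hεΔ, c • α - β, hγΔ, hεpos, hγpos, ?_⟩
        rw [hc3]; module

end Core

section Rho
variable {E : Type*} [NormedAddCommGroup E] [InnerProductSpace ℝ E]

lemma aux_rho_simple {Δ : Finset E} (hΔ0 : (0:E) ∉ Δ)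
    (hΔred : ∀ α ∈ Δ, ∀ t : ℝ, t • α ∈ Δ → t = 1 ∨ t = -1)
    (hΔrefl : ∀ α ∈ Δ, ∀ β ∈ Δ, β - (2 * ⟪β, α⟫ / ⟪α, α⟫) • α ∈ Δ)
    (hΔcrys : ∀ α ∈ Δ, ∀ β ∈ Δ, ∃ n : ℤ, 2 * ⟪β, α⟫ / ⟪α, α⟫ = (n : ℝ))
    {lam : E} (hreg : ∀ α ∈ Δ, ⟪α, lam⟫ ≠ 0)
    {α : E} (hα : α ∈ Δ) (hαpos : 0 < ⟪α, lam⟫)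
    (hsimple : ¬ ∃ β ∈ Δ, ∃ γ ∈ Δ, 0 < ⟪β, lam⟫ ∧ 0 < ⟪γ, lam⟫ ∧ β + γ = α) :
    ⟪∑ β ∈ Δ.filter (fun β => 0 < ⟪β, lam⟫), β, α⟫ = ⟪α, α⟫ := by
  classical
  have hα0 : α ≠ 0 := fun h => hΔ0 (h ▸ hα)
  have haa : 0 < ⟪α, α⟫ := aux_inner_self_pos hα0
  have haa' : ⟪α, α⟫ ≠ 0 := ne_of_gt haa
  set P := Δ.filter (fun β => 0 < ⟪β, lam⟫) with hP
  have hαP : α ∈ P := by rw [hP, Finset.mem_filter]; exact ⟨hα, hαpos⟩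
  have hmemP : ∀ β, β ∈ P ↔ β ∈ Δ ∧ 0 < ⟪β, lam⟫ := by
    intro β; rw [hP, Finset.mem_filter]
  have hneg : ∀ β, ⟪β - (2 * ⟪β, α⟫ / ⟪α, α⟫) • α, α⟫ = -⟪β, α⟫ := by
    intro β
    rw [inner_sub_left, real_inner_smul_left]
    field_simp
    ring
  have hsum0 : ∑ β ∈ P.erase α, ⟪β, α⟫ = 0 := by
    have g_mem : ∀ β ∈ P.erase α,
        β - (2 * ⟪β, α⟫ / ⟪α, α⟫) • α ∈ P.erase α := by
      intro β hβ
      obtain ⟨hβα, hβP⟩ := Finset.mem_erase.1 hβ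
      obtain ⟨hβΔ, hβpos⟩ := (hmemP β).1 hβP
      have hgΔ : β - (2 * ⟪β, α⟫ / ⟪α, α⟫) • α ∈ Δ := hΔrefl α hα β hβΔ
      have hgpos := aux_refl_pos hΔ0 hΔred hΔrefl hΔcrys hreg hα hαpos hsimple hβΔ hβpos hβα
      rw [Finset.mem_erase, hmemP]
      refine ⟨?_, hgΔ, hgpos⟩
      intro hgα
      have hβeq : β = (1 + 2 * ⟪β, α⟫ / ⟪α, α⟫) • α := by
        rw [add_smul, one_smul]
        exact eq_add_of_sub_eq hgα
      rcases hΔred α hα _ (hβeq ▸ hβΔ) with h1 | h1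
      · have h0 : (2 * ⟪β, α⟫ / ⟪α, α⟫) = 0 := by linarith
        rw [h0] at hβeq
        simp only [add_zero, one_smul] at hβeq
        exact hβα hβeq
      · have h0 : (2 * ⟪β, α⟫ / ⟪α, α⟫) = -2 := by linarith
        rw [h0] at hβeq
        have hβneg : β = -α := by rw [hβeq]; module
        rw [hβneg, inner_neg_left] at hβpos
        linarith
    refine Finset.sum_involution (fun β _ => β - (2 * ⟪β, α⟫ / ⟪α, α⟫) • α) ?_ ?_ g_mem ?_
    · intro β hβ
      rw [hneg]; ring
    · intro β hβ hβne
      intro hgβ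
      apply hβne
      have hgβ' : β - (2 * ⟪β, α⟫ / ⟪α, α⟫) • α = β := hgβ
      have h0 : ⟪β - (2 * ⟪β, α⟫ / ⟪α, α⟫) • α, α⟫ = ⟪β, α⟫ := by rw [hgβ']
      rw [hneg] at h0
      linarith [abs_nonneg ⟪β, α⟫]
    · intro β hβ
      show (β - (2 * ⟪β, α⟫ / ⟪α, α⟫) • α) -
        (2 * ⟪β - (2 * ⟪β, α⟫ / ⟪α, α⟫) • α, α⟫ / ⟪α, α⟫) • α = β
      rw [hneg β]
      have h2 : 2 * -⟪β, α⟫ / ⟪α, α⟫ = -(2 * ⟪β, α⟫ / ⟪α, α⟫) := by ring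
      rw [h2, neg_smul]
      abel
  calc ⟪∑ β ∈ P, β, α⟫ = ∑ β ∈ P, ⟪β, α⟫ := sum_inner P id α
    _ = (∑ β ∈ P.erase α, ⟪β, α⟫) + ⟪α, α⟫ := by
        rw [← Finset.sum_erase_add P _ hαP]
    _ = ⟪α, α⟫ := by rw [hsum0]; ring

end Rho

theorem regular_admissible_very_regular
    {E : Type*} [NormedAddCommGroup E] [InnerProductSpace ℝ E] [FiniteDimensional ℝ E]
    (Δ : Finset E)
    (hΔ0 : (0 : E) ∉ Δ)
    (hΔred : ∀ α ∈ Δ, ∀ t : ℝ, t • α ∈ Δ → t = 1 ∨ t = -1)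
    (hΔrefl : ∀ α ∈ Δ, ∀ β ∈ Δ, β - (2 * ⟪β, α⟫ / ⟪α, α⟫) • α ∈ Δ)
    (hΔcrys : ∀ α ∈ Δ, ∀ β ∈ Δ, ∃ n : ℤ, 2 * ⟪β, α⟫ / ⟪α, α⟫ = (n : ℝ))
    (v : E) (hv : ∀ α ∈ Δ, ⟪α, v⟫ ≠ 0)
    (Δpos : Finset E) (hΔpos : Δpos = Δ.filter (fun α => 0 < ⟪α, v⟫))
    (ρ : E) (hρ : ρ = (2 : ℝ)⁻¹ • ∑ α ∈ Δpos, α)    (lam : E)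
    (hreg : ∀ α ∈ Δ, ⟪lam, α⟫ ≠ 0)
    (ρlam : E) (hρlam : ρlam = (2 : ℝ)⁻¹ • ∑ α ∈ Δ.filter (fun α => 0 < ⟪α, lam⟫), α)
    (hadm : ∀ α ∈ Δ, ∃ n : ℤ, 2 * ⟪lam - ρlam, α⟫ / ⟪α, α⟫ = (n : ℝ)) :
    ∀ α ∈ Δ, 0 < ⟪α, lam⟫ → 0 ≤ ⟪lam - ρlam, α⟫ := by
  classical
  have hreg' : ∀ α ∈ Δ, ⟪α, lam⟫ ≠ 0 := by
    intro α hα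
    rw [real_inner_comm lam α]
    exact hreg α hα
  -- the simple case
  have simple_case : ∀ α ∈ Δ, 0 < ⟪α, lam⟫ →
      (¬ ∃ β ∈ Δ, ∃ γ ∈ Δ, 0 < ⟪β, lam⟫ ∧ 0 < ⟪γ, lam⟫ ∧ β + γ = α) →
      0 ≤ ⟪lam - ρlam, α⟫ := by
    intro α hα hαpos hsimple
    have hα0 : α ≠ 0 := fun h => hΔ0 (h ▸ hα)
    have haa : 0 < ⟪α, α⟫ := aux_inner_self_pos hα0
    have hrho := aux_rho_simple hΔ0 hΔred hΔrefl hΔcrys hreg' hα hαpos hsimple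
    have hρα : ⟪ρlam, α⟫ = 2⁻¹ * ⟪α, α⟫ := by
      rw [hρlam, real_inner_smul_left, hrho]
    obtain ⟨N, hN⟩ := hadm α hα
    have hlamα : ⟪lam - ρlam, α⟫ = ⟪lam, α⟫ - 2⁻¹ * ⟪α, α⟫ := by
      rw [inner_sub_left, hρα]
    have hNval : 2 * ⟪lam - ρlam, α⟫ = N * ⟪α, α⟫ := by
      rw [← hN]; field_simp
    have hNpos : (0:ℝ) ≤ N := by
      have h1 : (N:ℝ) * ⟪α, α⟫ = 2 * ⟪lam, α⟫ - ⟪α, α⟫ := by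
        rw [← hNval, hlamα]; ring
      have h2 : 0 < ⟪lam, α⟫ := by rw [real_inner_comm α lam]; exact hαpos
      have h3 : (-1 : ℝ) < N := by
        have hcontra : ((N:ℝ) + 1) * ⟪α, α⟫ > 0 := by nlinarith
        nlinarith
      have h4 : (-1 : ℤ) < N := by exact_mod_cast h3
      have : (0:ℤ) ≤ N := by omega
      exact_mod_cast this
    nlinarith
  -- strong induction on the number of positive roots below α
  have key : ∀ n : ℕ, ∀ α ∈ Δ, 0 < ⟪α, lam⟫ →
      ((Δ.filter (fun β => 0 < ⟪β, lam⟫)).filter (fun β => ⟪β, lam⟫ < ⟪α, lam⟫)).card ≤ n →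
      0 ≤ ⟪lam - ρlam, α⟫ := by
    intro n
    induction n with
    | zero =>
      intro α hα hαpos hcard
      by_cases hs : ∃ β ∈ Δ, ∃ γ ∈ Δ, 0 < ⟪β, lam⟫ ∧ 0 < ⟪γ, lam⟫ ∧ β + γ = α
      · exfalso
        obtain ⟨β, hβ, γ, hγ, hβp, hγp, hsum⟩ := hs
        have hβlt : ⟪β, lam⟫ < ⟪α, lam⟫ := by
          have : ⟪α, lam⟫ = ⟪β, lam⟫ + ⟪γ, lam⟫ := by rw [← hsum, inner_add_left]
          linarith
        have hβmem : β ∈ (Δ.filter (fun β => 0 < ⟪β, lam⟫)).filter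
            (fun β' => ⟪β', lam⟫ < ⟪α, lam⟫) := by
          simp only [Finset.mem_filter]
          exact ⟨⟨hβ, hβp⟩, hβlt⟩
        have := Finset.card_pos.2 ⟨β, hβmem⟩
        omega
      · exact simple_case α hα hαpos hs
    | succ n ih =>
      intro α hα hαpos hcard
      by_cases hs : ∃ β ∈ Δ, ∃ γ ∈ Δ, 0 < ⟪β, lam⟫ ∧ 0 < ⟪γ, lam⟫ ∧ β + γ = α
      · obtain ⟨β, hβ, γ, hγ, hβp, hγp, hsum⟩ := hs
        have hαval : ⟪α, lam⟫ = ⟪β, lam⟫ + ⟪γ, lam⟫ := by rw [← hsum, inner_add_left]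
        have hsub : ∀ δ ∈ Δ, 0 < ⟪δ, lam⟫ → ⟪δ, lam⟫ < ⟪α, lam⟫ →
            ((Δ.filter (fun β => 0 < ⟪β, lam⟫)).filter
              (fun β' => ⟪β', lam⟫ < ⟪δ, lam⟫)).card ≤ n := by
          intro δ hδ hδp hδlt
          have hss : (Δ.filter (fun β => 0 < ⟪β, lam⟫)).filter
              (fun β' => ⟪β', lam⟫ < ⟪δ, lam⟫) ⊂
              (Δ.filter (fun β => 0 < ⟪β, lam⟫)).filter
              (fun β' => ⟪β', lam⟫ < ⟪α, lam⟫) := by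
            constructor
            · intro x hx
              simp only [Finset.mem_filter] at hx ⊢
              exact ⟨hx.1, lt_trans hx.2 hδlt⟩
            · intro hsup
              have hδmem : δ ∈ (Δ.filter (fun β => 0 < ⟪β, lam⟫)).filter
                  (fun β' => ⟪β', lam⟫ < ⟪α, lam⟫) := by
                simp only [Finset.mem_filter]
                exact ⟨⟨hδ, hδp⟩, hδlt⟩
              have := hsup hδmem
              simp only [Finset.mem_filter] at this
              exact lt_irrefl _ this.2
          have := Finset.card_lt_card hss
          omega
        have hβle : ⟪β, lam⟫ < ⟪α, lam⟫ := by linarith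
        have hγle : ⟪γ, lam⟫ < ⟪α, lam⟫ := by linarith
        have h1 := ih β hβ hβp (hsub β hβ hβp hβle)
        have h2 := ih γ hγ hγp (hsub γ hγ hγp hγle)
        have : ⟪lam - ρlam, α⟫ = ⟪lam - ρlam, β⟫ + ⟪lam - ρlam, γ⟫ := by
          rw [← hsum, inner_add_right]
        linarith
      · exact simple_case α hα hαpos hs
  intro α hα hαpos
  exact key _ α hα hαpos le_rfl
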